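/- Suppose H satisfies the twist condition. Then the set of x ∈ [0, 1] for which the set U(x) of optimal points is a singleton (i.e. U(x) = {u⁺(x)} = {u⁻(x)}, so the optimal w(x) is unique) is generic: it contains a dense G_δ subset of [0, 1]. -/
import Mathlib

set_option maxHeartbeats 1000000

open Set Filter Topology
open scoped NNReal ENNReal

noncomputable def s19e (w : ℕ → Fin 2) : ℝ := ∑' n, (w n : ℝ) * (1/3 : ℝ) ^ n

lemma s19e_summable (w : ℕ → Fin 2) : Summable (fun n => (w n : ℝ) * (1/3 : ℝ) ^ n) := by
  apply Summable.of_nonneg_of_le (fun n => by positivity) (fun n => ?_)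
    (summable_geometric_of_lt_one (by norm_num) (by norm_num) :
      Summable fun n : ℕ => (1/3 : ℝ) ^ n)
  have : (w n : ℝ) ≤ 1 := by exact_mod_cast (w n).is_le
  nlinarith [pow_nonneg (by norm_num : (0:ℝ) ≤ 1/3) n]

lemma s19e_lt {a a' : ℕ → Fin 2} (n : ℕ) (hm : ∀ m, m < n → a m = a' m)
    (hn : a n < a' n) : s19e a < s19e a' := by
  have ha := s19e_summable a
  have ha' := s19e_summable a'
  have hsplit := Summable.sum_add_tsum_nat_add (n+1) ha
  have hsplit' := Summable.sum_add_tsum_nat_add (n+1) ha'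
  -- tail bounds
  have hgeom : Summable (fun i : ℕ => (1/3 : ℝ) ^ (i + (n+1))) := by
    have h0 := (summable_geometric_of_lt_one (by norm_num) (by norm_num) :
      Summable fun k : ℕ => (1/3 : ℝ) ^ k).mul_right ((1/3:ℝ)^(n+1))
    exact h0.congr (fun i => (pow_add _ _ _).symm)
  have htail_le : ∑' i, (a (i + (n+1)) : ℝ) * (1/3 : ℝ) ^ (i + (n+1))
      ≤ (1/2) * (1/3 : ℝ) ^ n := by
    have hs : Summable (fun i : ℕ => (a (i + (n+1)) : ℝ) * (1/3 : ℝ) ^ (i + (n+1))) := by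
      apply Summable.of_nonneg_of_le (fun i => by positivity) (fun i => ?_) hgeom
      have : (a (i + (n+1)) : ℝ) ≤ 1 := by exact_mod_cast (a (i + (n+1))).is_le
      nlinarith [pow_nonneg (by norm_num : (0:ℝ) ≤ 1/3) (i + (n+1))]
    have h1 : ∑' i, (a (i + (n+1)) : ℝ) * (1/3 : ℝ) ^ (i + (n+1))
        ≤ ∑' i : ℕ, (1/3 : ℝ) ^ (i + (n+1)) := by
      apply Summable.tsum_le_tsum _ hs hgeom
      intro i
      have : (a (i + (n+1)) : ℝ) ≤ 1 := by exact_mod_cast (a (i + (n+1))).is_le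
      nlinarith [pow_nonneg (by norm_num : (0:ℝ) ≤ 1/3) (i + (n+1))]
    have h2 : ∑' i : ℕ, (1/3 : ℝ) ^ (i + (n+1)) = (1/2) * (1/3 : ℝ) ^ n := by
      have : ∀ i : ℕ, (1/3 : ℝ) ^ (i + (n+1)) = (1/3:ℝ)^i * (1/3:ℝ)^(n+1) := fun i => pow_add _ _ _
      rw [tsum_congr this, tsum_mul_right, tsum_geometric_of_lt_one (by norm_num) (by norm_num)]
      ring
    linarith
  have htail_nonneg : (0:ℝ) ≤ ∑' i, (a' (i + (n+1)) : ℝ) * (1/3 : ℝ) ^ (i + (n+1)) :=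
    tsum_nonneg (fun i => by positivity)
  -- front sums
  have hfront : ∑ i ∈ Finset.range (n+1), (a i : ℝ) * (1/3:ℝ)^i + (1/3:ℝ)^n
      ≤ ∑ i ∈ Finset.range (n+1), (a' i : ℝ) * (1/3:ℝ)^i := by
    rw [Finset.sum_range_succ, Finset.sum_range_succ]
    have heq : ∑ i ∈ Finset.range n, (a i : ℝ) * (1/3:ℝ)^i
        = ∑ i ∈ Finset.range n, (a' i : ℝ) * (1/3:ℝ)^i := by
      apply Finset.sum_congr rfl
      intro i hi
      rw [hm i (Finset.mem_range.1 hi)]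
    have hcast : (a n : ℝ) + 1 ≤ (a' n : ℝ) := by
      have h1 : (a n : ℕ) + 1 ≤ (a' n : ℕ) := hn
      exact_mod_cast h1
    have hpw : (0:ℝ) < (1/3:ℝ)^n := by positivity
    nlinarith
  have e_a : s19e a = ∑ i ∈ Finset.range (n+1), (a i : ℝ) * (1/3:ℝ)^i
      + ∑' i, (a (i + (n+1)) : ℝ) * (1/3 : ℝ) ^ (i + (n+1)) := by
    rw [s19e, ← hsplit]
  have e_a' : s19e a' = ∑ i ∈ Finset.range (n+1), (a' i : ℝ) * (1/3:ℝ)^i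
      + ∑' i, (a' (i + (n+1)) : ℝ) * (1/3 : ℝ) ^ (i + (n+1)) := by
    rw [s19e, ← hsplit']
  have hpw : (0:ℝ) < (1/3:ℝ)^n := by positivity
  rw [e_a, e_a']
  linarith

lemma s19max {X : Type*} [TopologicalSpace X] [CompactSpace X] [Nonempty X]
    {f : X → EReal} (hf : UpperSemicontinuous f) : ∃ w, ∀ w', f w' ≤ f w := by
  by_cases hS : ∀ w, f w = ⊥
  · exact ⟨Classical.arbitrary X, fun w' => by simp [hS]⟩
  push_neg at hS
  obtain ⟨w₁, hw₁⟩ := hS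
  set S := ⨆ w, f w with hSdef
  have hbot : (⊥ : EReal) < S := lt_of_lt_of_le (Ne.bot_lt hw₁) (le_iSup f w₁)
  have hne : Nonempty {r : EReal // r < S} := ⟨⟨⊥, hbot⟩⟩
  set t : {r : EReal // r < S} → Set X := fun r => {w | r.1 ≤ f w} with ht
  have htd : Directed (· ⊇ ·) t := by
    intro r₁ r₂
    refine ⟨⟨max r₁.1 r₂.1, max_lt r₁.2 r₂.2⟩, fun w hw => ?_, fun w hw => ?_⟩
    · exact le_trans (le_max_left r₁.1 r₂.1) (mem_setOf.1 hw)
    · exact le_trans (le_max_right r₁.1 r₂.1) (mem_setOf.1 hw)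
  have htn : ∀ r, (t r).Nonempty := by
    intro r
    obtain ⟨w, hw⟩ := lt_iSup_iff.1 r.2
    exact ⟨w, hw.le⟩
  have htcl : ∀ r, IsClosed (t r) := by
    intro r
    have h : t r = (f ⁻¹' (Iio r.1))ᶜ := by
      ext w; simp [ht, not_lt]
    rw [h]
    exact (hf.isOpen_preimage r.1).isClosed_compl
  obtain ⟨w, hw⟩ := IsCompact.nonempty_iInter_of_directed_nonempty_isCompact_isClosed t htd htn
    (fun r => (htcl r).isCompact) htcl
  refine ⟨w, fun w' => ?_⟩
  have hSle : S ≤ f w := by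
    by_contra h
    push_neg at h
    obtain ⟨c, hc1, hc2⟩ := exists_between h
    exact absurd (mem_iInter.1 hw ⟨c, hc2⟩) (not_le.2 hc1)
  exact le_trans (le_iSup f w') hSle

lemma s19dense {B : Set ℝ} (hB : B.Countable) :
    Icc (0:ℝ) 1 ⊆ closure (Icc (0:ℝ) 1 \ B) := by
  intro x hx
  rw [Metric.mem_closure_iff]
  intro ε hε
  set l := max 0 (x - ε/2) with hl
  set u := min 1 (x + ε/2) with hu
  have hx0 : (0:ℝ) ≤ x := hx.1
  have hx1 : x ≤ 1 := hx.2
  have hlu : l < u := by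
    rcases lt_or_eq_of_le hx1 with h | h
    · have h1 : l ≤ x := max_le hx0 (by linarith)
      have h2 : x < u := lt_min h (by linarith)
      linarith
    · have h1 : l < 1 := max_lt (by norm_num) (by rw [← h]; linarith)
      have h2 : (1:ℝ) ≤ u := le_min le_rfl (by rw [← h]; linarith)
      linarith
  have hIcc : Icc l u ⊆ Icc (0:ℝ) 1 :=
    Icc_subset_Icc (le_max_left _ _) (min_le_left _ _)
  have hnotsub : ¬ (Icc l u ⊆ B) := by
    intro h
    have hc : (Icc l u).Countable := hB.mono h
    have := hc.le_aleph0
    rw [Cardinal.mk_Icc_real hlu] at this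
    exact absurd this (not_le.2 Cardinal.aleph0_lt_continuum)
  obtain ⟨y, hy, hyB⟩ := not_subset.1 hnotsub
  refine ⟨y, ⟨hIcc hy, hyB⟩, ?_⟩
  rw [Real.dist_eq, abs_lt]
  have h1 : x - ε/2 ≤ l := le_max_right _ _
  have h2 : u ≤ x + ε/2 := min_le_right _ _
  constructor <;> [linarith [hy.2, h2]; linarith [hy.1, h1]]

noncomputable def s19f (H : (ℕ → Fin 2) → ℝ → ℝ) (Istar : (ℕ → Fin 2) → ℝ≥0∞)
    (x : ℝ) (w : ℕ → Fin 2) : EReal :=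
  ((H w x : ℝ) : EReal) - (Istar w : EReal)

noncomputable def s19U (H : (ℕ → Fin 2) → ℝ → ℝ) (Istar : (ℕ → Fin 2) → ℝ≥0∞)
    (x : ℝ) : Set (ℕ → Fin 2) :=
  {w' | s19f H Istar x w' = ⨆ w'', s19f H Istar x w''}

lemma s19f_usc (H : (ℕ → Fin 2) → ℝ → ℝ)
    (hHcont : Continuous (fun p : (ℕ → Fin 2) × ℝ => H p.1 p.2))
    (Istar : (ℕ → Fin 2) → ℝ≥0∞) (hIstarlsc : LowerSemicontinuous Istar) (x : ℝ) :
    UpperSemicontinuous (s19f H Istar x) := by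
  have h1 : Continuous (fun w : ℕ → Fin 2 => ((H w x : ℝ) : EReal)) :=
    continuous_coe_real_ereal.comp (hHcont.comp (continuous_id.prodMk continuous_const))
  have h2 : UpperSemicontinuous (fun w : ℕ → Fin 2 => -(Istar w : EReal)) := by
    have hg : Continuous (fun c : ℝ≥0∞ => -(c : EReal)) :=
      continuous_neg.comp continuous_coe_ennreal_ereal
    have hmono : Antitone (fun c : ℝ≥0∞ => -(c : EReal)) := by
      intro c d h
      exact EReal.neg_le_neg_iff.2 (EReal.coe_ennreal_le_coe_ennreal_iff.2 h)
    exact hg.comp_lowerSemicontinuous_antitone hIstarlsc hmono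
  have heq : s19f H Istar x = fun w => ((H w x : ℝ) : EReal) + (-(Istar w : EReal)) := by
    funext w; rfl
  rw [heq]
  exact (h1.upperSemicontinuous).add' h2 (fun w => EReal.continuousAt_add
    (Or.inl (EReal.coe_ne_top _)) (Or.inl (EReal.coe_ne_bot _)))

lemma s19f_real (H : (ℕ → Fin 2) → ℝ → ℝ) (Istar : (ℕ → Fin 2) → ℝ≥0∞)
    (x : ℝ) (w : ℕ → Fin 2) (hw : Istar w ≠ ⊤) :
    s19f H Istar x w = ((H w x - (Istar w).toReal : ℝ) : EReal) := by
  have h1 : ((Istar w : EReal)) = (((Istar w).toReal : ℝ) : EReal) := by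
    rw [← EReal.toReal_coe_ennreal]
    exact (EReal.coe_toReal (by simp [hw]) (by simp)).symm
  rw [s19f, h1, ← EReal.coe_sub]

lemma s19f_bot (H : (ℕ → Fin 2) → ℝ → ℝ) (Istar : (ℕ → Fin 2) → ℝ≥0∞)
    (x : ℝ) (w : ℕ → Fin 2) (hw : Istar w = ⊤) :
    s19f H Istar x w = ⊥ := by
  rw [s19f, hw]
  simp [EReal.sub_top]

/-- Theorem 8.1 of the paper.
If `H` satisfies the twist condition, then the set of `x ∈ [0,1]` for which the set
`U(x)` of optimal points is a singleton (so the optimal `w(x)` is unique) is generic: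
it contains a dense `G_δ` subset of `[0,1]`. -/
theorem stmt19
    -- the strict lexicographic order on Σ = {0,1}^ℕ
    (lexLt : (ℕ → Fin 2) → (ℕ → Fin 2) → Prop)
    (hlex : ∀ a a' : ℕ → Fin 2,
      lexLt a a' ↔ ∃ n : ℕ, (∀ m, m < n → a m = a' m) ∧ a n < a' n)
    -- a continuous function H on Σ × I
    (H : (ℕ → Fin 2) → ℝ → ℝ)
    (hHcont : Continuous (fun p : (ℕ → Fin 2) × ℝ => H p.1 p.2))
    -- a lower semicontinuous deviation function I* : Σ → [0,∞], not identically +∞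
    (Istar : (ℕ → Fin 2) → ℝ≥0∞)
    (hIstarlsc : LowerSemicontinuous Istar)
    (hIstartop : ∃ w, Istar w ≠ ⊤)
    -- the twist condition for H
    (htwist : ∀ a a' : ℕ → Fin 2, ∀ x x' : ℝ, x ∈ Icc (0:ℝ) 1 → x' ∈ Icc (0:ℝ) 1 →
      lexLt a a' → x < x' → H a x + H a' x' < H a x' + H a' x) :
    -- conclusion: {x : U(x) is a singleton} contains a dense G_δ subset of [0,1]
    ∃ G : Set ℝ, G ⊆ Icc (0:ℝ) 1 ∧
      (∃ F : ℕ → Set ℝ, (∀ n, IsOpen (F n)) ∧ G = Icc (0:ℝ) 1 ∩ ⋂ n, F n) ∧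
      Icc (0:ℝ) 1 ⊆ closure G ∧
      ∀ x ∈ G, ∃ w : ℕ → Fin 2,
        {w' : ℕ → Fin 2 |
            ((H w' x : ℝ) : EReal) - (Istar w' : EReal)
              = ⨆ w'' : ℕ → Fin 2, (((H w'' x : ℝ) : EReal) - (Istar w'' : EReal))}
          = {w} := by
  classical
  -- maximizer exists for every x
  have hmax : ∀ x : ℝ, ∃ w, w ∈ s19U H Istar x ∧ ∀ w', s19f H Istar x w' ≤ s19f H Istar x w := by
    intro x
    obtain ⟨w, hw⟩ := s19max (s19f_usc H hHcont Istar hIstarlsc x)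
    exact ⟨w, le_antisymm (le_iSup (s19f H Istar x) w) (iSup_le hw), hw⟩
  obtain ⟨w₀, hw₀⟩ := hIstartop
  have hVbot : ∀ x : ℝ, (⨆ w'', s19f H Istar x w'') ≠ ⊥ := by
    intro x h
    have h1 : s19f H Istar x w₀ ≤ ⨆ w'', s19f H Istar x w'' := le_iSup (s19f H Istar x) w₀
    rw [h, le_bot_iff, s19f_real H Istar x w₀ hw₀] at h1
    exact EReal.coe_ne_bot _ h1
  have hUfin : ∀ x : ℝ, ∀ w ∈ s19U H Istar x, Istar w ≠ ⊤ := by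
    intro x w hw h
    have hw' : s19f H Istar x w = ⨆ w'', s19f H Istar x w'' := hw
    rw [s19f_bot H Istar x w h] at hw'
    exact hVbot x hw'.symm
  -- optimality in real terms
  have hopt : ∀ x : ℝ, ∀ w ∈ s19U H Istar x, ∀ w', Istar w' ≠ ⊤ →
      H w' x - (Istar w').toReal ≤ H w x - (Istar w).toReal := by
    intro x w hw w' hw'
    have hweq : s19f H Istar x w = ⨆ w'', s19f H Istar x w'' := hw
    have h1 : s19f H Istar x w' ≤ s19f H Istar x w :=
      (le_iSup (s19f H Istar x) w').trans hweq.ge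
    rw [s19f_real H Istar x w (hUfin x w hw), s19f_real H Istar x w' hw'] at h1
    exact_mod_cast h1
  -- monotonicity from the twist condition
  have hmono : ∀ x x' : ℝ, x ∈ Icc (0:ℝ) 1 → x' ∈ Icc (0:ℝ) 1 → x < x' →
      ∀ a ∈ s19U H Istar x, ∀ a' ∈ s19U H Istar x', ¬ lexLt a a' := by
    intro x x' hx hx' hlt a ha a' ha' hL
    have hIa := hUfin x a ha
    have hIa' := hUfin x' a' ha'
    have h1 := hopt x a ha a' hIa'
    have h2 := hopt x' a' ha' a hIa
    have h3 := htwist a a' x x' hx hx' hL hlt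
    linarith
  -- lexicographic trichotomy
  have htri : ∀ a a' : ℕ → Fin 2, a ≠ a' → lexLt a a' ∨ lexLt a' a := by
    intro a a' h
    have hne : ∃ n, a n ≠ a' n := Function.ne_iff.1 h
    have hspec := Nat.find_spec hne
    have hmin : ∀ m, m < Nat.find hne → a m = a' m := fun m hm => not_not.1 (Nat.find_min hne hm)
    rcases lt_or_gt_of_ne hspec with hc | hc
    · exact Or.inl ((hlex a a').2 ⟨Nat.find hne, hmin, hc⟩)
    · exact Or.inr ((hlex a' a).2 ⟨Nat.find hne, fun m hm => (hmin m hm).symm, hc⟩)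
  -- the bad set is countable
  set B : Set ℝ := {x | x ∈ Icc (0:ℝ) 1 ∧ ¬ ∃ w, s19U H Istar x = {w}} with hBdef
  have hBsub : B ⊆ ⋃ q : ℚ, {x : ℝ | x ∈ Icc (0:ℝ) 1 ∧ ∃ a a', a ∈ s19U H Istar x ∧
      a' ∈ s19U H Istar x ∧ s19e a < (q:ℝ) ∧ (q:ℝ) < s19e a'} := by
    intro x hxB
    obtain ⟨hxI, hxns⟩ := hxB
    obtain ⟨w, hwU, -⟩ := hmax x
    have hnsub : ¬ (s19U H Istar x ⊆ {w}) := by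
      intro h
      exact hxns ⟨w, h.antisymm (singleton_subset_iff.2 hwU)⟩
    obtain ⟨a, haU, haw⟩ := not_subset.1 hnsub
    rw [mem_singleton_iff] at haw
    rcases htri a w haw with hL | hL
    · obtain ⟨nn, hmm, hnn⟩ := (hlex a w).1 hL
      obtain ⟨q, hq1, hq2⟩ := exists_rat_btwn (s19e_lt nn hmm hnn)
      exact mem_iUnion.2 ⟨q, hxI, a, w, haU, hwU, hq1, hq2⟩
    · obtain ⟨nn, hmm, hnn⟩ := (hlex w a).1 hL
      obtain ⟨q, hq1, hq2⟩ := exists_rat_btwn (s19e_lt nn hmm hnn)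
      exact mem_iUnion.2 ⟨q, hxI, w, a, hwU, haU, hq1, hq2⟩
  have hkey : ∀ (q : ℚ) (y y' : ℝ), y ∈ Icc (0:ℝ) 1 → y' ∈ Icc (0:ℝ) 1 → y < y' →
      (∃ a a', a ∈ s19U H Istar y ∧ a' ∈ s19U H Istar y ∧ s19e a < (q:ℝ) ∧ (q:ℝ) < s19e a') →
      (∃ b b', b ∈ s19U H Istar y' ∧ b' ∈ s19U H Istar y' ∧ s19e b < (q:ℝ) ∧ (q:ℝ) < s19e b') →
      False := by
    rintro q y y' hy hy' hlt ⟨a, a', haU, ha'U, hq1, hq2⟩ ⟨b, b', hbU, hb'U, hq3, hq4⟩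
    have hnb : ¬ lexLt a b' := hmono y y' hy hy' hlt a haU b' hb'U
    by_cases hab : a = b'
    · rw [hab] at hq1; linarith
    rcases htri a b' hab with hL | hL
    · exact hnb hL
    · obtain ⟨nn, hmm, hnn⟩ := (hlex b' a).1 hL
      have := s19e_lt nn hmm hnn
      linarith
  have hBc : B.Countable := by
    refine Set.Countable.mono hBsub (Set.countable_iUnion (fun q => Set.Subsingleton.countable ?_))
    intro y hy y' hy'
    by_contra hne
    rcases lt_or_gt_of_ne hne with h | h
    · exact hkey q y y' hy.1 hy'.1 h hy.2 hy'.2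
    · exact hkey q y' y hy'.1 hy.1 h hy'.2 hy.2
  -- construct the dense Gδ set
  have hB2 : (insert (2:ℝ) B).Countable := hBc.insert 2
  obtain ⟨g, hg⟩ := hB2.exists_eq_range ⟨2, mem_insert 2 B⟩
  refine ⟨Icc (0:ℝ) 1 \ B, diff_subset, ⟨fun n => {g n}ᶜ, fun n => isOpen_compl_singleton, ?_⟩,
    s19dense hBc, ?_⟩
  · ext x
    simp only [mem_diff, mem_inter_iff, mem_iInter, mem_compl_iff, mem_singleton_iff]
    constructor
    · rintro ⟨hxI, hxB⟩
      refine ⟨hxI, fun n hn => ?_⟩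
      have hmem : x ∈ insert (2:ℝ) B := by rw [hg]; exact ⟨n, hn.symm⟩
      rcases mem_insert_iff.1 hmem with h2 | hB'
      · rw [h2] at hxI
        exact absurd hxI.2 (by norm_num)
      · exact hxB hB'
    · rintro ⟨hxI, hxn⟩
      refine ⟨hxI, fun hxB => ?_⟩
      have hmem : x ∈ range g := by rw [← hg]; exact mem_insert_of_mem _ hxB
      obtain ⟨n, hn⟩ := hmem
      exact hxn n hn.symm
  · intro x hx
    obtain ⟨hxI, hxB⟩ := hx
    have hsing : ∃ w, s19U H Istar x = {w} := by
      by_contra h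
      exact hxB ⟨hxI, h⟩
    exact hsing
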